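/- The subgroup H = ℤ·(1,1) + ℤ·(√3, √2) + ℤ·(√2, 1) of (ℝ², +), i.e. H = {(n + m√3 + p√2, n + m√2 + p) : n, m, p ∈ ℤ}, is dense in ℝ². -/

import Mathlib

lemma not_sq6 : ¬ IsSquare (6:ℕ) := by
  rintro ⟨r, hr⟩
  have : r ≤ 6 := by nlinarith
  interval_cases r <;> omega

lemma irr6 : Irrational (Real.sqrt 6) := by
  have : Irrational (Real.sqrt ((6:ℕ):ℝ)) := irrational_sqrt_natCast_iff.mpr not_sq6
  norm_num at this
  norm_num

lemma irr3 : Irrational (Real.sqrt 3) := (Nat.prime_three).irrational_sqrt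

lemma rat_comb2 (A B : ℚ) (h : (A:ℝ) * Real.sqrt 2 + B = 0) : A = 0 ∧ B = 0 := by
  by_cases hA : A = 0
  · refine ⟨hA, ?_⟩
    rw [hA] at h
    push_cast at h
    simp at h
    exact_mod_cast h
  · exfalso
    apply irrational_sqrt_two
    refine ⟨-B / A, ?_⟩
    have hA' : (A:ℝ) ≠ 0 := by exact_mod_cast hA
    push_cast
    rw [div_eq_iff hA']
    linear_combination -h

lemma sqrt3_notin (a b : ℚ) : Real.sqrt 3 ≠ (a:ℝ) + (b:ℝ) * Real.sqrt 2 := by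
  intro h
  have h2 : Real.sqrt 2 * Real.sqrt 2 = 2 := Real.mul_self_sqrt (by norm_num)
  have h3 : Real.sqrt 3 * Real.sqrt 3 = 3 := Real.mul_self_sqrt (by norm_num)
  have key' : ((2*a*b : ℚ) : ℝ) * Real.sqrt 2 + ((a^2 + 2*b^2 - 3 : ℚ) : ℝ) = 0 := by
    push_cast
    nlinarith [congrArg (fun x => x * x) h, h2, h3]
  obtain ⟨hab, hc⟩ := rat_comb2 _ _ key'
  have hab' : a * b = 0 := by linarith
  rcases mul_eq_zero.mp hab' with ha | hb
  · rw [ha] at h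
    apply irr6
    refine ⟨2 * b, ?_⟩
    have h6 : Real.sqrt 6 = Real.sqrt 2 * Real.sqrt 3 := by
      rw [← Real.sqrt_mul (by norm_num : (0:ℝ) ≤ 2)]; norm_num
    rw [h6, h]
    push_cast
    linear_combination (-(b:ℝ)) * h2
  · rw [hb] at h
    push_cast at h
    exact irr3 ⟨a, by linarith⟩

lemma comb23 (A B C : ℤ) (h : (A:ℝ) * Real.sqrt 3 + (B:ℝ) * Real.sqrt 2 + C = 0) :
    A = 0 ∧ B = 0 ∧ C = 0 := by
  by_cases hA : A = 0
  · subst hA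
    push_cast at h
    simp at h
    have := rat_comb2 B C (by push_cast; linarith)
    exact ⟨rfl, by exact_mod_cast this.1, by exact_mod_cast this.2⟩
  · exfalso
    have hA' : (A:ℝ) ≠ 0 := by exact_mod_cast hA
    apply sqrt3_notin (-C/A) (-B/A)
    push_cast
    rw [show ((-C:ℝ))/(A:ℝ) + ((-B:ℝ))/(A:ℝ) * Real.sqrt 2 = (-C + -B * Real.sqrt 2)/A from by ring,
      eq_div_iff hA']
    linear_combination h

noncomputable section

def Hset : Set (ℝ × ℝ) :=
  {v : ℝ × ℝ | ∃ n m p : ℤ,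
      v = ((n : ℝ) + (m : ℝ) * Real.sqrt 3 + (p : ℝ) * Real.sqrt 2,
           (n : ℝ) + (m : ℝ) * Real.sqrt 2 + (p : ℝ))}

def Hgrp : AddSubgroup (ℝ × ℝ) where
  carrier := Hset
  zero_mem' := ⟨0, 0, 0, by norm_num; rfl⟩
  add_mem' := by
    rintro a b ⟨n1, m1, p1, rfl⟩ ⟨n2, m2, p2, rfl⟩
    exact ⟨n1 + n2, m1 + m2, p1 + p2, by rw [Prod.mk_add_mk]; push_cast; ring_nf⟩
  neg_mem' := by
    rintro a ⟨n, m, p, rfl⟩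
    exact ⟨-n, -m, -p, by rw [Prod.neg_mk]; push_cast; ring_nf⟩

lemma sqrt2_gt : (1:ℝ) < Real.sqrt 2 := by
  nlinarith [Real.sq_sqrt (by norm_num : (0:ℝ) ≤ 2), Real.sqrt_nonneg 2]

lemma sqrt2_lt : Real.sqrt 2 < 1.5 := by
  nlinarith [Real.sq_sqrt (by norm_num : (0:ℝ) ≤ 2), Real.sqrt_nonneg 2]

lemma fract_pair_close (β : ℝ) {N : ℕ} (hN : 0 < N) {m₁ m₂ : ℕ} (hlt : m₂ < m₁)
    (hfl : ⌊Int.fract ((m₁:ℝ)*β) * N⌋ = ⌊Int.fract ((m₂:ℝ)*β) * N⌋) :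
    ∃ K : ℤ, |((m₁ - m₂ : ℕ) : ℝ) * β - K| < 1/N := by
  refine ⟨⌊(m₁:ℝ)*β⌋ - ⌊(m₂:ℝ)*β⌋, ?_⟩
  have hN0 : (0:ℝ) < N := by exact_mod_cast hN
  have h1 := Int.abs_sub_lt_one_of_floor_eq_floor hfl
  have hdiff : Int.fract ((m₁:ℝ)*β) * N - Int.fract ((m₂:ℝ)*β) * N
      = (((m₁ - m₂ : ℕ) : ℝ) * β - ((⌊(m₁:ℝ)*β⌋ - ⌊(m₂:ℝ)*β⌋ : ℤ) : ℝ)) * N := by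
    rw [Int.fract, Int.fract]
    push_cast [Nat.cast_sub hlt.le]
    ring
  rw [hdiff] at h1
  rw [lt_div_iff₀ hN0, ← abs_of_nonneg hN0.le, ← abs_mul]
  exact h1

lemma small_elt : ∀ δ : ℝ, 0 < δ → ∃ h ∈ Hset, h ≠ 0 ∧ ‖h‖ < δ := by
  intro δ hδ
  obtain ⟨N, hNgt⟩ := exists_nat_gt (2 / δ)
  have hN : 0 < N := by
    by_contra h
    push_neg at h
    interval_cases N
    · have := div_pos (by norm_num : (0:ℝ)<2) hδ
      simp at hNgt
      linarith
  have hN0 : (0:ℝ) < N := by exact_mod_cast hN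
  have h2N : 2 / (N:ℝ) < δ := by
    rw [div_lt_iff₀ hN0]
    calc (2:ℝ) = (2/δ) * δ := by field_simp
    _ < N * δ := by apply mul_lt_mul_of_pos_right hNgt hδ
    _ = δ * N := by ring
  set θ : ℝ := Real.sqrt 2 - 1 with hθ
  have hθpos : 0 < θ := by simp [hθ]; linarith [sqrt2_gt]
  have hθlt : θ < 1/2 := by simp [hθ]; nlinarith [sqrt2_lt]
  set β : ℝ := (Real.sqrt 3 - 2)/θ with hβ
  -- pigeonhole
  have maps : ∀ a ∈ Finset.range (N*N+1),
      (fun m : ℕ => ((⌊Int.fract ((m:ℝ)*β) * N⌋, ⌊Int.fract ((m:ℝ)*(Real.sqrt 2)) * N⌋) : ℤ × ℤ))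
        a ∈ Finset.Ico (0:ℤ) N ×ˢ Finset.Ico (0:ℤ) N := by
    intro a _
    simp only [Finset.mem_product, Finset.mem_Ico]
    refine ⟨⟨?_, ?_⟩, ?_, ?_⟩ <;>
      first
      | exact Int.floor_nonneg.mpr (mul_nonneg (Int.fract_nonneg _) hN0.le)
      | exact Int.floor_lt.mpr (by
          push_cast
          calc Int.fract _ * (N:ℝ) < 1 * N := by
                apply mul_lt_mul_of_pos_right (Int.fract_lt_one _) hN0
          _ = N := one_mul _)
  have hcard : (Finset.Ico (0:ℤ) N ×ˢ Finset.Ico (0:ℤ) N).card < (Finset.range (N*N+1)).card := by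
    rw [Finset.card_product, Finset.card_range, Int.card_Ico]
    simp
  obtain ⟨a, _, b, _, hab, hfab⟩ := Finset.exists_ne_map_eq_of_card_lt_of_maps_to hcard maps
  obtain ⟨m₁, m₂, hlt, hf1, hf2⟩ : ∃ m₁ m₂ : ℕ, m₂ < m₁ ∧
      ⌊Int.fract ((m₁:ℝ)*β) * N⌋ = ⌊Int.fract ((m₂:ℝ)*β) * N⌋ ∧
      ⌊Int.fract ((m₁:ℝ)*(Real.sqrt 2)) * N⌋ = ⌊Int.fract ((m₂:ℝ)*(Real.sqrt 2)) * N⌋ := by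
    rcases hab.lt_or_gt with h' | h'
    · exact ⟨b, a, h', (Prod.ext_iff.mp hfab.symm).1, (Prod.ext_iff.mp hfab.symm).2⟩
    · exact ⟨a, b, h', (Prod.ext_iff.mp hfab).1, (Prod.ext_iff.mp hfab).2⟩
  obtain ⟨n', hn'⟩ := fract_pair_close β hN hlt hf1
  obtain ⟨k, hk⟩ := fract_pair_close (Real.sqrt 2) hN hlt hf2
  set m : ℕ := m₁ - m₂ with hm
  have mpos : 0 < m := Nat.sub_pos_of_lt hlt
  have h2 : Real.sqrt 2 * Real.sqrt 2 = 2 := Real.mul_self_sqrt (by norm_num)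
  have hθβ : θ * β = Real.sqrt 3 - 2 := by
    rw [hβ]; field_simp
  refine ⟨((n' : ℝ) + ((m:ℤ) : ℝ) * Real.sqrt 3 + ((-n'-k : ℤ) : ℝ) * Real.sqrt 2,
           (n' : ℝ) + ((m:ℤ) : ℝ) * Real.sqrt 2 + ((-n'-k : ℤ) : ℝ)),
          ⟨n', (m:ℤ), -n'-k, rfl⟩, ?_, ?_⟩
  · -- nonzero
    intro h0
    rw [Prod.ext_iff] at h0
    have hsec : ((m:ℝ)) * Real.sqrt 2 - k = 0 := by
      have := h0.2
      simp only [Prod.snd_zero] at this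
      push_cast at this ⊢
      linarith
    have := rat_comb2 (m:ℚ) (-k:ℚ) (by push_cast; linarith [hsec])
    have : (m:ℚ) = 0 := this.1
    have : m = 0 := by exact_mod_cast this
    omega
  · -- norm bound
    have hsec : (n' : ℝ) + ((m:ℤ) : ℝ) * Real.sqrt 2 + ((-n'-k : ℤ) : ℝ)
        = (m:ℝ) * Real.sqrt 2 - k := by push_cast; ring
    have hfst : (n' : ℝ) + ((m:ℤ) : ℝ) * Real.sqrt 3 + ((-n'-k : ℤ) : ℝ) * Real.sqrt 2
        = θ * ((m:ℝ)*β - n') + Real.sqrt 2 * ((m:ℝ) * Real.sqrt 2 - k) := by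
      push_cast
      clear_value θ β
      linear_combination (-(m:ℝ)) * hθβ + (-(m:ℝ)) * h2 + (n':ℝ) * hθ
    rw [Prod.norm_def]
    simp only [Real.norm_eq_abs]
    rw [hsec, hfst]
    have b1 : |θ * ((m:ℝ)*β - n') + Real.sqrt 2 * ((m:ℝ) * Real.sqrt 2 - k)| < 2 / N := by
      calc |θ * ((m:ℝ)*β - n') + Real.sqrt 2 * ((m:ℝ) * Real.sqrt 2 - k)|
          ≤ |θ * ((m:ℝ)*β - n')| + |Real.sqrt 2 * ((m:ℝ) * Real.sqrt 2 - k)| := abs_add_le _ _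
        _ = θ * |(m:ℝ)*β - n'| + Real.sqrt 2 * |(m:ℝ) * Real.sqrt 2 - k| := by
            rw [abs_mul, abs_mul, abs_of_nonneg hθpos.le,
              abs_of_nonneg (Real.sqrt_nonneg 2)]
        _ < (1/2) * (1/N) + (1.5) * (1/N) := by
            apply add_lt_add
            · apply mul_lt_mul' hθlt.le hn' (abs_nonneg _) (by norm_num)
            · apply mul_lt_mul' sqrt2_lt.le hk (abs_nonneg _) (by norm_num)
        _ = 2 / N := by ring
    have b2 : |(m:ℝ) * Real.sqrt 2 - k| < 2 / N := by
      calc |(m:ℝ) * Real.sqrt 2 - k| < 1/N := hk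
        _ ≤ 2/N := by gcongr <;> norm_num
    exact max_lt (b1.trans h2N) (b2.trans h2N)

lemma hv1 : ((1:ℝ), (1:ℝ)) ∈ Hset := ⟨1, 0, 0, by norm_num⟩
lemma hv2 : (Real.sqrt 3, Real.sqrt 2) ∈ Hset := ⟨0, 1, 0, by norm_num⟩
lemma hv3 : (Real.sqrt 2, (1:ℝ)) ∈ Hset := ⟨0, 0, 1, by norm_num⟩

set_option maxHeartbeats 2000000 in
theorem dense_subgroup_R2' : Dense Hset := by
  intro z
  have hsmall : ∀ j : ℕ, ∃ h : ℝ × ℝ, h ∈ Hset ∧ h ≠ 0 ∧ ‖h‖ < 1/(j+1) := by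
    intro j
    obtain ⟨h, h1, hh2, h3⟩ := small_elt (1/(j+1)) (by positivity)
    exact ⟨h, h1, hh2, h3⟩
  choose g hg hg0 hgs using hsmall
  have hrpos : ∀ j, (0:ℝ) < ‖g j‖ := fun j => norm_pos_iff.mpr (hg0 j)
  set u : ℕ → ℝ × ℝ := fun j => ‖g j‖⁻¹ • g j with hu
  have hu1 : ∀ j, u j ∈ Metric.sphere (0:ℝ×ℝ) 1 := by
    intro j
    rw [mem_sphere_zero_iff_norm, hu]
    simp only [norm_smul, norm_inv, norm_norm]
    field_simp
    exact div_self (hrpos j).ne'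
  obtain ⟨uu, huu, φ, hφ, hconv⟩ := (isCompact_sphere (0:ℝ×ℝ) 1).tendsto_subseq hu1
  have huu1 : ‖uu‖ = 1 := mem_sphere_zero_iff_norm.mp huu
  -- the whole line ℝ•uu is in the closure of Hset
  have hline : ∀ t : ℝ, t • uu ∈ closure Hset := by
    intro t
    set r : ℕ → ℝ := fun j => ‖g (φ j)‖ with hr
    have hr0 : ∀ j, 0 < r j := fun j => hrpos (φ j)
    have hrsmall : ∀ j, r j ≤ 1/(j+1) := by
      intro j
      calc r j ≤ 1/((φ j : ℝ)+1) := (hgs (φ j)).le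
        _ ≤ 1/((j:ℝ)+1) := by
            gcongr
            exact_mod_cast hφ.le_apply
    have hrtend : Filter.Tendsto r Filter.atTop (nhds 0) := by
      apply squeeze_zero (fun j => (hr0 j).le) hrsmall
      exact tendsto_one_div_add_atTop_nhds_zero_nat
    set s : ℕ → ℝ := fun j => (⌊t / r j⌋ : ℝ) * r j with hs
    have hst : ∀ j, |s j - t| ≤ r j := by
      intro j
      have f1 : (⌊t / r j⌋ : ℝ) ≤ t / r j := Int.floor_le _
      have f2 : t / r j - 1 < ⌊t / r j⌋ := Int.sub_one_lt_floor _
      have htr : t / r j * r j = t := div_mul_cancel₀ t (hr0 j).ne'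
      have g1 : (⌊t / r j⌋:ℝ) * r j ≤ t := by
        calc (⌊t / r j⌋:ℝ) * r j ≤ (t / r j) * r j := mul_le_mul_of_nonneg_right f1 (hr0 j).le
          _ = t := htr
      have g2 : t - r j < (⌊t / r j⌋:ℝ) * r j := by
        calc t - r j = (t/r j - 1) * r j := by rw [sub_mul, one_mul, htr]
          _ < _ := mul_lt_mul_of_pos_right f2 (hr0 j)
      simp only [hs]
      rw [abs_le]
      constructor <;> linarith
    have hstend : Filter.Tendsto s Filter.atTop (nhds t) := by
      have h0 : Filter.Tendsto (fun j => s j - t) Filter.atTop (nhds 0) :=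
        squeeze_zero_norm hst hrtend
      have := h0.add_const t
      simpa using this
    have hwt : Filter.Tendsto (fun j => s j • u (φ j)) Filter.atTop (nhds (t • uu)) :=
      hstend.smul hconv
    have hmem : ∀ j, s j • u (φ j) ∈ Hset := by
      intro j
      have : s j • u (φ j) = ⌊t / r j⌋ • g (φ j) := by
        rw [hs, hu]
        simp only
        rw [smul_smul, mul_assoc, mul_inv_cancel₀ (hr0 j).ne', mul_one,
          Int.cast_smul_eq_zsmul]
      rw [this]
      exact AddSubgroup.zsmul_mem Hgrp (hg (φ j)) _
    exact mem_closure_of_tendsto hwt (Filter.Eventually.of_forall hmem)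
  -- the linear functional
  set A : ℝ := uu.2 with hA
  set B : ℝ := -uu.1 with hB
  have hABnz : ¬(A = 0 ∧ B = 0) := by
    rintro ⟨hA0, hB0⟩
    have h1 : uu.1 = 0 := by rw [hB] at hB0; linarith
    have h2 : uu.2 = 0 := hA0
    rw [Prod.norm_def, h1, h2] at huu1
    norm_num at huu1
  have sqrt2ne : Real.sqrt 2 - 1 ≠ 0 := by linarith [sqrt2_gt]
  have habfromE : ∀ {cE : Prop}, (A + B = 0) → (A * Real.sqrt 2 + B = 0) → False := by
    intro _ e1 e3
    have : A * (Real.sqrt 2 - 1) = 0 := by linarith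
    rcases mul_eq_zero.mp this with h | h
    · exact hABnz ⟨h, by linarith⟩
    · exact sqrt2ne h
  set φf : (ℝ × ℝ) →+ ℝ := AddMonoidHom.mk' (fun v => A * v.1 + B * v.2)
    (by intro v w; simp only [Prod.fst_add, Prod.snd_add]; ring) with hφf
  set J : AddSubgroup ℝ := Hgrp.map φf with hJ
  rcases J.dense_or_cyclic with hd | ⟨c, hc⟩
  · -- dense case : conclude
    rw [← closure_closure (s := Hset), Metric.mem_closure_iff]
    intro ε hε
    have hz' := hd (A * z.1 + B * z.2)
    rw [Metric.mem_closure_iff] at hz'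
    obtain ⟨rr, hrJ, hrd⟩ := hz' ε hε
    obtain ⟨h, hhH, hfh⟩ := hrJ
    have hfh' : A * h.1 + B * h.2 = rr := hfh
    set ρ : ℝ := uu.1^2 + uu.2^2 with hρ
    have hρ1 : (1:ℝ) ≤ ρ := by
      rw [Prod.norm_def] at huu1
      rcases max_choice ‖uu.1‖ ‖uu.2‖ with hmx | hmx <;>
        rw [hmx] at huu1 <;>
        [ (have : |uu.1| = 1 := huu1); (have : |uu.2| = 1 := huu1) ] <;>
        nlinarith [sq_abs uu.1, sq_abs uu.2, sq_nonneg uu.1, sq_nonneg uu.2]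
    have hρ0 : ρ ≠ 0 := by linarith
    have habs1 : |uu.1| ≤ 1 := by
      rw [Prod.norm_def] at huu1
      rw [← Real.norm_eq_abs]
      calc ‖uu.1‖ ≤ max ‖uu.1‖ ‖uu.2‖ := le_max_left _ _
        _ = 1 := huu1
    have habs2 : |uu.2| ≤ 1 := by
      rw [Prod.norm_def] at huu1
      rw [← Real.norm_eq_abs]
      calc ‖uu.2‖ ≤ max ‖uu.1‖ ‖uu.2‖ := le_max_right _ _
        _ = 1 := huu1
    set tt : ℝ := ((z.1 - h.1) * uu.1 + (z.2 - h.2) * uu.2) / ρ with htt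
    refine ⟨h + tt • uu, ?_, ?_⟩
    · -- membership in closure Hset
      have h1 : h ∈ closure Hset := subset_closure hhH
      have h2 : tt • uu ∈ closure Hset := hline tt
      have : h + tt • uu ∈ Hgrp.topologicalClosure := by
        apply AddSubgroup.add_mem
        · exact h1
        · exact h2
      exact this
    · -- distance
      have key1 : (h + tt • uu).1 - z.1 = uu.2 * ((A * h.1 + B * h.2) - (A * z.1 + B * z.2)) / ρ := by
        show h.1 + tt * uu.1 - z.1 = _
        rw [htt, hA, hB]
        field_simp
        ring
      have key2 : (h + tt • uu).2 - z.2 = -uu.1 * ((A * h.1 + B * h.2) - (A * z.1 + B * z.2)) / ρ := by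
        show h.2 + tt * uu.2 - z.2 = _
        rw [htt, hA, hB]
        field_simp
        ring
      set D : ℝ := (A * h.1 + B * h.2) - (A * z.1 + B * z.2) with hD
      have hρpos : (0:ℝ) < ρ := lt_of_lt_of_le one_pos hρ1
      have hdd : dist z (h + tt • uu) ≤ |D| := by
        rw [dist_eq_norm, Prod.norm_def]
        have c1 : (z - (h + tt • uu)).1 = -(uu.2 * D / ρ) := by
          rw [Prod.fst_sub, ← key1]; ring
        have c2 : (z - (h + tt • uu)).2 = -(-uu.1 * D / ρ) := by
          rw [Prod.snd_sub, ← key2]; ring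
        rw [c1, c2, Real.norm_eq_abs, Real.norm_eq_abs, abs_neg, abs_neg]
        apply max_le
        · calc |uu.2 * D / ρ| = |uu.2| * |D| / ρ := by rw [abs_div, abs_mul, abs_of_pos hρpos]
            _ ≤ 1 * |D| / ρ := by gcongr
            _ ≤ |D| := by rw [one_mul, div_le_iff₀ hρpos]; nlinarith [abs_nonneg D]
        · calc |(-uu.1) * D / ρ| = |uu.1| * |D| / ρ := by rw [abs_div, abs_mul, abs_neg, abs_of_pos hρpos]
            _ ≤ 1 * |D| / ρ := by gcongr
            _ ≤ |D| := by rw [one_mul, div_le_iff₀ hρpos]; nlinarith [abs_nonneg D]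
      calc dist z (h + tt • uu) ≤ |D| := hdd
        _ = dist (A * z.1 + B * z.2) rr := by
            rw [hD, hfh', Real.dist_eq, abs_sub_comm]
        _ < ε := hrd
  · -- cyclic case : contradiction
    exfalso
    have m1 : φf ((1:ℝ), (1:ℝ)) ∈ J := AddSubgroup.mem_map.mpr ⟨_, hv1, rfl⟩
    have m2 : φf (Real.sqrt 3, Real.sqrt 2) ∈ J := AddSubgroup.mem_map.mpr ⟨_, hv2, rfl⟩
    have m3 : φf (Real.sqrt 2, (1:ℝ)) ∈ J := AddSubgroup.mem_map.mpr ⟨_, hv3, rfl⟩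
    rw [hc, AddSubgroup.mem_closure_singleton] at m1 m2 m3
    obtain ⟨k1, hk1⟩ := m1
    obtain ⟨k2, hk2⟩ := m2
    obtain ⟨k3, hk3⟩ := m3
    have hφv : ∀ v : ℝ × ℝ, φf v = A * v.1 + B * v.2 := fun v => rfl
    have E1 : (k1:ℝ) * c = A + B := by
      rw [← zsmul_eq_mul, hk1, hφv]; norm_num
    have E2 : (k2:ℝ) * c = A * Real.sqrt 3 + B * Real.sqrt 2 := by
      rw [← zsmul_eq_mul, hk2, hφv]
    have E3 : (k3:ℝ) * c = A * Real.sqrt 2 + B := by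
      rw [← zsmul_eq_mul, hk3, hφv]; norm_num
    have h2 : Real.sqrt 2 * Real.sqrt 2 = 2 := Real.mul_self_sqrt (by norm_num)
    by_cases hc0 : c = 0
    · rw [hc0, mul_zero] at E1 E3
      exact habfromE (cE := True) E1.symm E3.symm
    · have d1 : A * (Real.sqrt 2 - 1) = ((k3 - k1 : ℤ):ℝ) * c := by
        push_cast; linear_combination E1 - E3
      have d2 : A * (Real.sqrt 3 - Real.sqrt 2) = ((k2:ℝ) - (k1:ℝ) * Real.sqrt 2) * c := by
        linear_combination Real.sqrt 2 * E1 - E2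
      have dd : c * (((k3 - k1 : ℤ):ℝ) * (Real.sqrt 3 - Real.sqrt 2)
          - ((k2:ℝ) - (k1:ℝ) * Real.sqrt 2) * (Real.sqrt 2 - 1)) = 0 := by
        linear_combination (Real.sqrt 2 - 1) * d2 - (Real.sqrt 3 - Real.sqrt 2) * d1
      have hbr : ((k3 - k1 : ℤ):ℝ) * (Real.sqrt 3 - Real.sqrt 2)
          - ((k2:ℝ) - (k1:ℝ) * Real.sqrt 2) * (Real.sqrt 2 - 1) = 0 := by
        rcases mul_eq_zero.mp dd with h | h
        · exact absurd h hc0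
        · exact h
      have key : ((k3 - k1 : ℤ):ℝ) * Real.sqrt 3 + ((-(k3+k2) : ℤ):ℝ) * Real.sqrt 2
          + ((k2 + 2*k1 : ℤ):ℝ) = 0 := by
        push_cast
        push_cast at hbr
        linear_combination hbr - (k1:ℝ) * h2
      obtain ⟨q1, q2, q3⟩ := comb23 _ _ _ key
      have hk1z : k1 = 0 := by omega
      have hk3z : k3 = 0 := by omega
      rw [hk1z] at E1
      rw [hk3z] at E3
      push_cast at E1 E3
      exact habfromE (cE := True) (by linarith) (by linarith)

/-- The subgroup `H = ℤ·(1,1) + ℤ·(√3, √2) + ℤ·(√2, 1)` of `(ℝ², +)` is dense in `ℝ²`. -/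
theorem dense_subgroup_R2 :
    Dense {v : ℝ × ℝ | ∃ n m p : ℤ,
      v = ((n : ℝ) + (m : ℝ) * Real.sqrt 3 + (p : ℝ) * Real.sqrt 2,
           (n : ℝ) + (m : ℝ) * Real.sqrt 2 + (p : ℝ))} :=
  dense_subgroup_R2'
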